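/- In a compact Hausdorff space K satisfying the countable chain condition, every point-finite family of nonempty open subsets of K is countable. -/

import Mathlib

open Set

/-- Every family of sets contains a maximal pairwise disjoint subfamily. -/
private lemma exists_maximal_disjoint {α : Type*} (S : Set (Set α)) :
    ∃ D, D ⊆ S ∧ D.PairwiseDisjoint id ∧
      ∀ V ∈ S, V ∉ D → ¬ (insert V D).PairwiseDisjoint id := by
  have hz : ∀ c ⊆ {D | D ⊆ S ∧ D.PairwiseDisjoint id}, IsChain (· ⊆ ·) c →
      ∃ ub ∈ {D | D ⊆ S ∧ D.PairwiseDisjoint id}, ∀ s ∈ c, s ⊆ ub := by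
    intro c hc hchain
    refine ⟨⋃₀ c, ⟨?_, ?_⟩, fun s hs => subset_sUnion_of_mem hs⟩
    · exact sUnion_subset fun d hd => (hc hd).1
    · intro A hA B hB hAB
      obtain ⟨d₁, hd₁, hAd₁⟩ := hA
      obtain ⟨d₂, hd₂, hBd₂⟩ := hB
      rcases hchain.total hd₁ hd₂ with h | h
      · exact (hc hd₂).2 (h hAd₁) hBd₂ hAB
      · exact (hc hd₁).2 hAd₁ (h hBd₂) hAB
  obtain ⟨m, hm⟩ := zorn_subset {D | D ⊆ S ∧ D.PairwiseDisjoint id} hz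
  refine ⟨m, hm.prop.1, hm.prop.2, ?_⟩
  intro V hV hVm hins
  exact hVm ((hm.2 ⟨insert_subset hV hm.prop.1, hins⟩ (subset_insert V m)) (mem_insert V m))

/-- The set of points of order at most `n` of a point-finite family of open sets is closed. -/
private lemma isClosed_ord_le {K : Type*} [TopologicalSpace K]
    (𝒰 : Set (Set K)) (hopen : ∀ U ∈ 𝒰, IsOpen U)
    (hpf : ∀ x : K, {U ∈ 𝒰 | x ∈ U}.Finite) (n : ℕ) :
    IsClosed {x : K | ({U ∈ 𝒰 | x ∈ U}).ncard ≤ n} := by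
  rw [← isOpen_compl_iff, isOpen_iff_mem_nhds]
  intro x hx
  have hT : IsOpen (⋂₀ {U ∈ 𝒰 | x ∈ U}) :=
    (hpf x).isOpen_sInter fun U hU => hopen U hU.1
  have hxT : x ∈ ⋂₀ {U ∈ 𝒰 | x ∈ U} := fun U hU => hU.2
  refine Filter.mem_of_superset (hT.mem_nhds hxT) fun y hy => ?_
  intro hyn
  refine hx (le_trans (Set.ncard_le_ncard ?_ (hpf y)) hyn)
  intro U hU
  exact ⟨hU.1, hy U hU⟩

/-- In a ccc space, a family of open sets whose order is at most `n` at every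
point of an open set `W` has only countably many members meeting `W`. -/
private lemma countable_meets {K : Type*} [TopologicalSpace K]
    (hccc : ∀ 𝒱 : Set (Set K), (∀ V ∈ 𝒱, IsOpen V ∧ V.Nonempty) →
      𝒱.PairwiseDisjoint id → 𝒱.Countable) :
    ∀ (n : ℕ) (𝒜 : Set (Set K)) (W : Set K), (∀ A ∈ 𝒜, IsOpen A) → IsOpen W →
      (∀ x : K, {A ∈ 𝒜 | x ∈ A}.Finite) →
      (∀ x ∈ W, ({A ∈ 𝒜 | x ∈ A}).ncard ≤ n) →
      {A ∈ 𝒜 | (A ∩ W).Nonempty}.Countable := by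
  intro n
  induction n with
  | zero =>
    intro 𝒜 W hopen hW hfin hord
    convert Set.countable_empty
    ext A
    simp only [mem_setOf_eq, mem_empty_iff_false, iff_false, not_and]
    rintro hA ⟨x, hxA, hxW⟩
    have h1 := hord x hxW
    have h2 : 0 < ({A' ∈ 𝒜 | x ∈ A'}).ncard :=
      (Set.ncard_pos (hfin x)).mpr ⟨A, hA, hxA⟩
    omega
  | succ n ih =>
    intro 𝒜 W hopen hW hfin hord
    set ℬ : Set (Set K) := {B | ∃ A ∈ 𝒜, B = A ∩ W ∧ B.Nonempty} with hℬ
    obtain ⟨𝒟, h𝒟ℬ, h𝒟d, h𝒟max⟩ := exists_maximal_disjoint ℬ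
    have h𝒟c : 𝒟.Countable := by
      refine hccc 𝒟 (fun V hV => ?_) h𝒟d
      obtain ⟨A, hA, hVeq, hVne⟩ := h𝒟ℬ hV
      exact ⟨hVeq ▸ (hopen A hA).inter hW, hVne⟩
    -- every member of 𝒜 meeting W meets some D ∈ 𝒟
    have hcover : ∀ A ∈ 𝒜, (A ∩ W).Nonempty → ∃ D ∈ 𝒟, (A ∩ D).Nonempty := by
      intro A hA hAW
      by_contra hcon
      push_neg at hcon
      have hB : (A ∩ W) ∈ ℬ := ⟨A, hA, rfl, hAW⟩
      have hBnot : (A ∩ W) ∉ 𝒟 := by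
        intro h
        obtain ⟨x, hx⟩ := hAW
        exact eq_empty_iff_forall_notMem.mp (hcon _ h) x ⟨hx.1, hx⟩
      refine h𝒟max (A ∩ W) hB hBnot (h𝒟d.insert ?_)
      intro D hD _
      exact Set.disjoint_left.mpr fun x hx hxD =>
        eq_empty_iff_forall_notMem.mp (hcon D hD) x ⟨hx.1, hxD⟩
    -- conclude by covering with countably many countable pieces
    have hsub : {A ∈ 𝒜 | (A ∩ W).Nonempty} ⊆
        ⋃ D ∈ 𝒟, {A ∈ 𝒜 | (A ∩ D).Nonempty} := by
      rintro A ⟨hA, hAW⟩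
      obtain ⟨D, hD, hAD⟩ := hcover A hA hAW
      exact mem_biUnion hD ⟨hA, hAD⟩
    refine (Set.Countable.biUnion h𝒟c fun D hD => ?_).mono hsub
    obtain ⟨A₀, hA₀, hDeq, hDne⟩ := h𝒟ℬ hD
    have hDopen : IsOpen D := hDeq ▸ (hopen A₀ hA₀).inter hW
    have key : {A ∈ 𝒜 \ {A₀} | (A ∩ D).Nonempty}.Countable := by
      refine ih (𝒜 \ {A₀}) D (fun A hA => hopen A hA.1) hDopen
        (fun x => (hfin x).subset fun A hA => ⟨hA.1.1, hA.2⟩) ?_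
      intro x hxD
      have hxA₀ : x ∈ A₀ := (hDeq ▸ hxD).1
      have hxW : x ∈ W := (hDeq ▸ hxD).2
      have hsub2 : {A ∈ 𝒜 \ {A₀} | x ∈ A} ⊆ {A ∈ 𝒜 | x ∈ A} \ {A₀} :=
        fun A hA => ⟨⟨hA.1.1, hA.2⟩, hA.1.2⟩
      have h1 : ({A ∈ 𝒜 | x ∈ A} \ {A₀}).ncard < ({A ∈ 𝒜 | x ∈ A}).ncard :=
        Set.ncard_diff_singleton_lt_of_mem ⟨hA₀, hxA₀⟩ (hfin x)
      have h2 := hord x hxW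
      have h3 := Set.ncard_le_ncard hsub2 ((hfin x).diff)
      omega
    have : {A ∈ 𝒜 | (A ∩ D).Nonempty} ⊆
        insert A₀ {A ∈ 𝒜 \ {A₀} | (A ∩ D).Nonempty} := by
      rintro A ⟨hA, hAD⟩
      by_cases h : A = A₀
      · exact h ▸ mem_insert _ _
      · exact mem_insert_of_mem _ ⟨⟨hA, h⟩, hAD⟩
    exact (key.insert A₀).mono this

/-- Baire extraction: inside any nonempty open set there is a nonempty open subset
on which the order of the point-finite family is uniformly bounded. -/
private lemma exists_bounded_subset {K : Type*} [TopologicalSpace K] [CompactSpace K]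
    [T2Space K] (𝒰 : Set (Set K)) (hopen : ∀ U ∈ 𝒰, IsOpen U)
    (hpf : ∀ x : K, {U ∈ 𝒰 | x ∈ U}.Finite)
    (U₀ : Set K) (hU₀ : IsOpen U₀) (hne : U₀.Nonempty) :
    ∃ V : Set K, IsOpen V ∧ V.Nonempty ∧ V ⊆ U₀ ∧
      ∃ n, ∀ x ∈ V, ({U ∈ 𝒰 | x ∈ U}).ncard ≤ n := by
  set C := closure U₀ with hC
  have hCc : CompactSpace C := isCompact_iff_compactSpace.mp isClosed_closure.isCompact
  have hCne : Nonempty C := ⟨⟨hne.choose, subset_closure hne.choose_spec⟩⟩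
  set f : ℕ → Set C := fun n => Subtype.val ⁻¹' {x | ({U ∈ 𝒰 | x ∈ U}).ncard ≤ n} with hf
  have hcl : ∀ n, IsClosed (f n) :=
    fun n => (isClosed_ord_le 𝒰 hopen hpf n).preimage continuous_subtype_val
  have hcover : ⋃ n, f n = univ := by
    ext y
    simp only [mem_iUnion, mem_univ, iff_true, hf, mem_preimage, mem_setOf_eq]
    exact ⟨({U ∈ 𝒰 | (y : K) ∈ U}).ncard, le_rfl⟩
  obtain ⟨n, y, hy⟩ := nonempty_interior_of_iUnion_of_closed hcl hcover
  obtain ⟨O, hO, hOeq⟩ := isOpen_induced_iff.mp (isOpen_interior (s := f n))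
  have hyO : (y : K) ∈ O := by
    have : y ∈ Subtype.val ⁻¹' O := hOeq ▸ hy
    exact this
  have hOU₀ : (O ∩ U₀).Nonempty := by
    have hyC : (y : K) ∈ closure U₀ := y.2
    exact mem_closure_iff.mp hyC O hO hyO
  refine ⟨O ∩ U₀, hO.inter hU₀, hOU₀, inter_subset_right, n, ?_⟩
  intro x hx
  have hxC : x ∈ C := subset_closure hx.2
  have : (⟨x, hxC⟩ : C) ∈ Subtype.val ⁻¹' O := hx.1
  rw [hOeq] at this
  have h2 : (⟨x, hxC⟩ : C) ∈ f n := interior_subset this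
  exact h2

/-- In a compact Hausdorff space satisfying the countable chain condition, every point-finite
family of nonempty open subsets is countable. -/
theorem countable_of_pointFinite_of_ccc (K : Type*) [TopologicalSpace K] [CompactSpace K]
    [T2Space K]
    (hccc : ∀ 𝒱 : Set (Set K), (∀ V ∈ 𝒱, IsOpen V ∧ V.Nonempty) →
      𝒱.PairwiseDisjoint id → 𝒱.Countable)
    (𝒰 : Set (Set K)) (hopen : ∀ U ∈ 𝒰, IsOpen U ∧ U.Nonempty)
    (hpf : ∀ x : K, {U ∈ 𝒰 | x ∈ U}.Finite) : 𝒰.Countable := by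
  have hopen' : ∀ U ∈ 𝒰, IsOpen U := fun U hU => (hopen U hU).1
  set S : Set (Set K) :=
    {V | IsOpen V ∧ V.Nonempty ∧ ∃ n, ∀ x ∈ V, ({U ∈ 𝒰 | x ∈ U}).ncard ≤ n} with hS
  obtain ⟨𝒟, h𝒟S, h𝒟d, h𝒟max⟩ := exists_maximal_disjoint S
  have h𝒟c : 𝒟.Countable :=
    hccc 𝒟 (fun V hV => ⟨(h𝒟S hV).1, (h𝒟S hV).2.1⟩) h𝒟d
  have hcover : ∀ U ∈ 𝒰, ∃ D ∈ 𝒟, (U ∩ D).Nonempty := by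
    intro U hU
    by_contra hcon
    push_neg at hcon
    obtain ⟨V, hVo, hVne, hVsub, n, hVn⟩ :=
      exists_bounded_subset 𝒰 hopen' hpf U (hopen U hU).1 (hopen U hU).2
    have hVS : V ∈ S := ⟨hVo, hVne, n, hVn⟩
    have hVnotin : V ∉ 𝒟 := by
      intro h
      obtain ⟨x, hx⟩ := hVne
      exact eq_empty_iff_forall_notMem.mp (hcon V h) x ⟨hVsub hx, hx⟩
    refine h𝒟max V hVS hVnotin (h𝒟d.insert ?_)
    intro D hD _
    exact Set.disjoint_left.mpr fun x hxV hxD =>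
      eq_empty_iff_forall_notMem.mp (hcon D hD) x ⟨hVsub hxV, hxD⟩
  have hsub : 𝒰 ⊆ ⋃ D ∈ 𝒟, {U ∈ 𝒰 | (U ∩ D).Nonempty} := by
    intro U hU
    obtain ⟨D, hD, hUD⟩ := hcover U hU
    exact mem_biUnion hD ⟨hU, hUD⟩
  refine (Set.Countable.biUnion h𝒟c fun D hD => ?_).mono hsub
  obtain ⟨hDo, hDne, n, hDn⟩ := h𝒟S hD
  exact countable_meets hccc n 𝒰 D hopen' hDo hpf hDn
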